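/- Interpolation property of the full interpolatory tangent projection: let X ∈ ℝ^{n×r} and V ∈ ℝ^{m×r}, with index sets I (rows) and J (columns) of size r such that X(I,:) and V(J,:) are invertible. For H ∈ ℝ^{n×m} define P(H) = H(:,J) V(J,:)^{-T} V^T − X X(I,:)^{-1} H(I,J) V(J,:)^{-T} V^T + X X(I,:)^{-1} H(I,:). Then P(H)(I,:) = H(I,:) and P(H)(:,J) = H(:,J). -/
import Mathlib


open Matrix

lemma submatrix_mul_left_aux {n m r k : ℕ} (A : Matrix (Fin n) (Fin k) ℝ)
    (B : Matrix (Fin k) (Fin m) ℝ) (I : Fin r → Fin n) :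
    (A * B).submatrix I id = A.submatrix I id * B := by
  ext i j; simp [mul_apply]

lemma submatrix_mul_right_aux {n m r k : ℕ} (A : Matrix (Fin n) (Fin k) ℝ)
    (B : Matrix (Fin k) (Fin m) ℝ) (J : Fin r → Fin m) :
    (A * B).submatrix id J = A * B.submatrix id J := by
  ext i j; simp [mul_apply]

lemma submatrix_sub_add_aux {n m r q : ℕ} (A B C : Matrix (Fin n) (Fin m) ℝ)
    (I : Fin r → Fin n) (J : Fin q → Fin m) :
    (A - B + C).submatrix I J = A.submatrix I J - B.submatrix I J + C.submatrix I J := by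
  ext i j; simp

/-- Interpolation property of the full interpolatory tangent projection:
    P(H)(I,:) = H(I,:) and P(H)(:,J) = H(:,J). -/
theorem full_interpolatory_projection_interpolates
    (n m r : ℕ) (hr : 1 ≤ r) (hn : r ≤ n) (hm : r ≤ m)
    (X : Matrix (Fin n) (Fin r) ℝ) (V : Matrix (Fin m) (Fin r) ℝ)
    (I : Fin r → Fin n) (J : Fin r → Fin m)
    (hI : Function.Injective I) (hJ : Function.Injective J)
    (hXI : IsUnit (X.submatrix I id)) (hVJ : IsUnit (V.submatrix J id))
    (H : Matrix (Fin n) (Fin m) ℝ)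
    (PH : Matrix (Fin n) (Fin m) ℝ)
    (hPH : PH = H.submatrix id J * ((V.submatrix J id)⁻¹)ᵀ * Vᵀ
        - X * (X.submatrix I id)⁻¹ * H.submatrix I J * ((V.submatrix J id)⁻¹)ᵀ * Vᵀ
        + X * (X.submatrix I id)⁻¹ * H.submatrix I id) :
    PH.submatrix I id = H.submatrix I id ∧ PH.submatrix id J = H.submatrix id J := by
  have hXdet : IsUnit (X.submatrix I id).det := (Matrix.isUnit_iff_isUnit_det _).mp hXI
  have hVdet : IsUnit (V.submatrix J id).det := (Matrix.isUnit_iff_isUnit_det _).mp hVJ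
  have hX1 : X.submatrix I id * (X.submatrix I id)⁻¹ = 1 :=
    Matrix.mul_nonsing_inv _ hXdet
  have hV1 : V.submatrix J id * (V.submatrix J id)⁻¹ = 1 :=
    Matrix.mul_nonsing_inv _ hVdet
  have hVt : ((V.submatrix J id)⁻¹)ᵀ * (V.submatrix J id)ᵀ = 1 := by
    rw [← Matrix.transpose_mul, hV1, Matrix.transpose_one]
  have hHIJ : (H.submatrix id J).submatrix I id = H.submatrix I J := by
    ext i j; simp
  have hHIJ' : (H.submatrix I id).submatrix id J = H.submatrix I J := by
    ext i j; simp
  have hVJt : Vᵀ.submatrix id J = (V.submatrix J id)ᵀ := by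
    ext i j; simp
  subst hPH
  constructor
  · rw [submatrix_sub_add_aux]
    simp only [submatrix_mul_left_aux, hHIJ, hX1, Matrix.one_mul]
    abel
  · rw [submatrix_sub_add_aux]
    rw [submatrix_mul_right_aux, hVJt, Matrix.mul_assoc, hVt, Matrix.mul_one]
    rw [submatrix_mul_right_aux (X * (X.submatrix I id)⁻¹ * H.submatrix I J * ((V.submatrix J id)⁻¹)ᵀ) Vᵀ,
      hVJt, Matrix.mul_assoc, hVt, Matrix.mul_one]
    rw [submatrix_mul_right_aux, hHIJ']
    abel
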